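/- Let T > 0, θ > 0, c ≥ 1 and β ∈ (0,θ). (a) Every continuous function Y:[0,T]→[0,∞) with Y(T)=0, Y(t)>0 for all t∈[0,T), differentiable on [0,T) with Y'(t) = −θ² (c + β√(T−t)/√(Y(t)))^{−2}, satisfies √(Y(t)) ≤ (θ²/(4cβ))·√(T−t) for all t∈[0,T). (b) If β = θ/2, then Ȳ(t) = (θ/(2c))²·(T−t) is such a solution and it is maximal: every solution Y as in (a) satisfies Y(t) ≤ Ȳ(t) for all t∈[0,T]. -/

import Mathlib

open MeasureTheory Set Filter Topology

/-- A positive solution on `[0,T)` of the backward ODE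
`Y'(t) = −θ² (c + β√(T−t)/√(Y(t)))⁻²` with `Y(T) = 0`. -/
def Sol19 (T θ c β : ℝ) (Y : ℝ → ℝ) : Prop :=
  ContinuousOn Y (Set.Icc 0 T) ∧ Y T = 0 ∧ (∀ t ∈ Set.Ico 0 T, 0 < Y t) ∧
    ∀ t ∈ Set.Ico 0 T,
      HasDerivWithinAt Y
        (-(θ ^ 2 * ((c + β * Real.sqrt (T - t) / Real.sqrt (Y t)) ^ 2)⁻¹))
        (Set.Ico 0 T) t


/-- Comparison lemma: if `Y' ≥ -L` on `[0,T)` and `Y T = 0`, then `Y t ≤ L (T - t)`. -/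
lemma lemA19 (T L : ℝ) (Y f : ℝ → ℝ)
    (hcont : ContinuousOn Y (Set.Icc 0 T)) (hYT : Y T = 0)
    (hderiv : ∀ t ∈ Set.Ico 0 T, HasDerivWithinAt Y (f t) (Set.Ico 0 T) t)
    (hf : ∀ t ∈ Set.Ico 0 T, -L ≤ f t) :
    ∀ t ∈ Set.Icc 0 T, Y t ≤ L * (T - t) := by
  have hgd : ∀ t ∈ interior (Set.Icc (0:ℝ) T), HasDerivAt (fun s => Y s + L * s) (f t + L) t := by
    intro t ht
    rw [interior_Icc] at ht
    have hmem : Set.Ico 0 T ∈ 𝓝 t := Ico_mem_nhds ht.1 ht.2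
    have hd : HasDerivAt Y (f t) t := (hderiv t ⟨ht.1.le, ht.2⟩).hasDerivAt hmem
    have h := hd.add ((hasDerivAt_id t).const_mul L)
    simp only [mul_one] at h
    exact h
  have hmono : MonotoneOn (fun s => Y s + L * s) (Set.Icc 0 T) := by
    apply monotoneOn_of_deriv_nonneg (convex_Icc 0 T)
    · exact hcont.add (continuous_const.mul continuous_id).continuousOn
    · exact fun t ht => (hgd t ht).differentiableAt.differentiableWithinAt
    · intro t ht
      rw [(hgd t ht).deriv]
      rw [interior_Icc] at ht
      have := hf t ⟨ht.1.le, ht.2⟩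
      linarith
  intro t ht
  have h := hmono ht (right_mem_Icc.mpr (ht.1.trans ht.2)) ht.2
  simp only [hYT] at h
  linarith

/-- Bootstrap step. -/
lemma lemB19 (T θ c β : ℝ) (hθ : 0 < θ) (hc : 1 ≤ c)
    (hβ0 : 0 < β) (Y : ℝ → ℝ) (hY : Sol19 T θ c β Y) (M : ℝ) (hM : 0 < M)
    (hbound : ∀ t ∈ Set.Ico 0 T, Y t ≤ M ^ 2 * (T - t)) :
    ∀ t ∈ Set.Icc 0 T, Y t ≤ (θ ^ 2 / (4 * c * β) * M) * (T - t) := by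
  obtain ⟨hcont, hYT, hpos, hderiv⟩ := hY
  have hc0 : (0:ℝ) < c := lt_of_lt_of_le one_pos hc
  apply lemA19 T _ Y _ hcont hYT hderiv
  intro t ht
  set u := β * Real.sqrt (T - t) / Real.sqrt (Y t) with hu
  have hYt : 0 < Y t := hpos t ht
  have hsY : 0 < Real.sqrt (Y t) := Real.sqrt_pos.mpr hYt
  have hTt : 0 < T - t := sub_pos.mpr ht.2
  have hsT : 0 < Real.sqrt (T - t) := Real.sqrt_pos.mpr hTt
  have hsYle : Real.sqrt (Y t) ≤ M * Real.sqrt (T - t) := by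
    have h1 := hbound t ht
    have h2 : Y t ≤ (M * Real.sqrt (T - t)) ^ 2 := by
      rw [mul_pow, Real.sq_sqrt hTt.le]; linarith
    calc Real.sqrt (Y t) ≤ Real.sqrt ((M * Real.sqrt (T - t)) ^ 2) := Real.sqrt_le_sqrt h2
      _ = M * Real.sqrt (T - t) := Real.sqrt_sq (by positivity)
  have hu_ge : β / M ≤ u := by
    rw [hu, div_le_div_iff₀ hM hsY]
    nlinarith
  have hsq : 4 * c * β / M ≤ (c + u) ^ 2 := by
    have h4 : 4 * c * u ≤ (c + u) ^ 2 := by nlinarith [sq_nonneg (c - u)]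
    have h5 : 4 * c * (β / M) ≤ 4 * c * u := by nlinarith
    calc 4 * c * β / M = 4 * c * (β / M) := by ring
      _ ≤ 4 * c * u := h5
      _ ≤ (c + u) ^ 2 := h4
  have hpos4 : 0 < 4 * c * β / M := by positivity
  have hinv : ((c + u) ^ 2)⁻¹ ≤ (4 * c * β / M)⁻¹ := inv_anti₀ hpos4 hsq
  have h6 : θ ^ 2 * ((c + u) ^ 2)⁻¹ ≤ θ ^ 2 * (4 * c * β / M)⁻¹ := by nlinarith [sq_nonneg θ]
  have heq : θ ^ 2 * (4 * c * β / M)⁻¹ = θ ^ 2 / (4 * c * β) * M := by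
    field_simp
  linarith

/-- Base bound. -/
lemma lemC19 (T θ c β : ℝ) (hθ : 0 < θ) (hc : 1 ≤ c)
    (hβ0 : 0 < β) (Y : ℝ → ℝ) (hY : Sol19 T θ c β Y) :
    ∀ t ∈ Set.Icc 0 T, Y t ≤ (θ / c) ^ 2 * (T - t) := by
  obtain ⟨hcont, hYT, hpos, hderiv⟩ := hY
  have hc0 : (0:ℝ) < c := lt_of_lt_of_le one_pos hc
  apply lemA19 T _ Y _ hcont hYT hderiv
  intro t ht
  set u := β * Real.sqrt (T - t) / Real.sqrt (Y t) with hu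
  have hYt : 0 < Y t := hpos t ht
  have hsY : 0 < Real.sqrt (Y t) := Real.sqrt_pos.mpr hYt
  have hu0 : 0 ≤ u := by positivity
  have hsq : c ^ 2 ≤ (c + u) ^ 2 := by nlinarith
  have hinv : ((c + u) ^ 2)⁻¹ ≤ (c ^ 2)⁻¹ := inv_anti₀ (by positivity) hsq
  have h6 : θ ^ 2 * ((c + u) ^ 2)⁻¹ ≤ θ ^ 2 * (c ^ 2)⁻¹ := by nlinarith [sq_nonneg θ]
  have heq : θ ^ 2 * (c ^ 2)⁻¹ = (θ / c) ^ 2 := by field_simp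
  linarith

noncomputable def mseq19 (K M0 : ℝ) : ℕ → ℝ
  | 0 => M0
  | n + 1 => Real.sqrt (K * mseq19 K M0 n)

lemma mseq19_pos (K M0 : ℝ) (hK : 0 < K) (hM0 : 0 < M0) : ∀ n, 0 < mseq19 K M0 n := by
  intro n
  induction n with
  | zero => exact hM0
  | succ n ih => exact Real.sqrt_pos.mpr (mul_pos hK ih)

lemma mseq19_eq (K M0 : ℝ) (hK : 0 < K) (hM0 : 0 < M0) (n : ℕ) :
    mseq19 K M0 n = K * (M0 / K) ^ ((1/2 : ℝ) ^ n) := by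
  have hr : 0 < M0 / K := div_pos hM0 hK
  induction n with
  | zero =>
    simp only [mseq19, pow_zero, Real.rpow_one]
    field_simp
  | succ n ih =>
    rw [mseq19, ih,
      show K * (K * (M0 / K) ^ ((1/2 : ℝ) ^ n)) = K ^ 2 * (M0 / K) ^ ((1/2 : ℝ) ^ n) by ring,
      Real.sqrt_mul (by positivity), Real.sqrt_sq hK.le, Real.sqrt_eq_rpow,
      ← Real.rpow_mul hr.le, ← pow_succ]

/-- (a) every positive solution `Y` of
`Y' = −θ²(c + β√(T−t)/√Y)⁻²`, `Y(T)=0`, satisfies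
`√(Y(t)) ≤ (θ²/(4cβ))√(T−t)` on `[0,T)`; (b) if `β = θ/2`, then
`Ȳ(t) = (θ/(2c))²(T−t)` is such a solution and every solution satisfies
`Y ≤ Ȳ` on `[0,T]`. -/
theorem stmt19 (T θ c β : ℝ) (hT : 0 < T) (hθ : 0 < θ) (hc : 1 ≤ c)
    (hβ : β ∈ Set.Ioo 0 θ) :
    (∀ Y : ℝ → ℝ, Sol19 T θ c β Y → ∀ t ∈ Set.Ico 0 T,
        Real.sqrt (Y t) ≤ θ ^ 2 / (4 * c * β) * Real.sqrt (T - t)) ∧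
    (β = θ / 2 →
      Sol19 T θ c β (fun t => (θ / (2 * c)) ^ 2 * (T - t)) ∧
      ∀ Y : ℝ → ℝ, Sol19 T θ c β Y →
        ∀ t ∈ Set.Icc 0 T, Y t ≤ (θ / (2 * c)) ^ 2 * (T - t)) := by
  obtain ⟨hβ0, hβθ⟩ := hβ
  have hc0 : (0:ℝ) < c := lt_of_lt_of_le one_pos hc
  set K := θ ^ 2 / (4 * c * β) with hKdef
  have hK : 0 < K := by positivity
  set M0 := θ / c with hM0def
  have hM0 : 0 < M0 := by positivity
  -- Main quadratic bound
  have main : ∀ Y : ℝ → ℝ, Sol19 T θ c β Y → ∀ t ∈ Set.Icc 0 T,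
      Y t ≤ K ^ 2 * (T - t) := by
    intro Y hY t ht
    have hbnd : ∀ n, ∀ s ∈ Set.Ico 0 T, Y s ≤ (mseq19 K M0 n) ^ 2 * (T - s) := by
      intro n
      induction n with
      | zero =>
        intro s hs
        exact lemC19 T θ c β hθ hc hβ0 Y hY s ⟨hs.1, hs.2.le⟩
      | succ n ih =>
        intro s hs
        have hstep := lemB19 T θ c β hθ hc hβ0 Y hY (mseq19 K M0 n)
          (mseq19_pos K M0 hK hM0 n) ih s ⟨hs.1, hs.2.le⟩
        have : (mseq19 K M0 (n+1)) ^ 2 = K * mseq19 K M0 n :=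
          Real.sq_sqrt (mul_pos hK (mseq19_pos K M0 hK hM0 n)).le
        rw [this]
        calc Y s ≤ (θ ^ 2 / (4 * c * β) * mseq19 K M0 n) * (T - s) := hstep
          _ = K * mseq19 K M0 n * (T - s) := by rw [hKdef]
    -- limit
    have htend : Tendsto (fun n => mseq19 K M0 n) atTop (𝓝 K) := by
      have hr : 0 < M0 / K := div_pos hM0 hK
      have h2 : Tendsto (fun n : ℕ => ((1:ℝ)/2) ^ n) atTop (𝓝 0) :=
        tendsto_pow_atTop_nhds_zero_of_lt_one (by norm_num) (by norm_num)
      have h3 : Tendsto (fun n : ℕ => Real.log (M0 / K) * ((1:ℝ)/2) ^ n) atTop (𝓝 0) := by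
        have := h2.const_mul (Real.log (M0 / K))
        simpa using this
      have h4 : Tendsto (fun n : ℕ => Real.exp (Real.log (M0 / K) * ((1:ℝ)/2) ^ n)) atTop
          (𝓝 1) := by
        have := (Real.continuous_exp.tendsto 0).comp h3
        simpa [Function.comp_def] using this
      have h5 : ∀ n : ℕ, mseq19 K M0 n
          = K * Real.exp (Real.log (M0 / K) * ((1:ℝ)/2) ^ n) := by
        intro n
        rw [mseq19_eq K M0 hK hM0 n, Real.rpow_def_of_pos hr]
      simp only [h5]
      have := h4.const_mul K
      simpa using this
    rcases eq_or_lt_of_le ht.2 with hEq | hlt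
    · have hYT : Y T = 0 := hY.2.1
      rw [hEq, hYT]
      nlinarith [sq_nonneg K]
    · have htend2 : Tendsto (fun n => (mseq19 K M0 n) ^ 2 * (T - t)) atTop
          (𝓝 (K ^ 2 * (T - t))) := (htend.pow 2).mul_const _
      exact ge_of_tendsto' htend2 (fun n => hbnd n t ⟨ht.1, hlt⟩)
  have parta : ∀ Y : ℝ → ℝ, Sol19 T θ c β Y → ∀ t ∈ Set.Ico 0 T,
      Real.sqrt (Y t) ≤ θ ^ 2 / (4 * c * β) * Real.sqrt (T - t) := by
    intro Y hY t ht
    have hTt : 0 ≤ T - t := by linarith [ht.2]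
    have h1 : Y t ≤ (K * Real.sqrt (T - t)) ^ 2 := by
      rw [mul_pow, Real.sq_sqrt hTt]
      exact main Y hY t ⟨ht.1, ht.2.le⟩
    calc Real.sqrt (Y t) ≤ Real.sqrt ((K * Real.sqrt (T - t)) ^ 2) := Real.sqrt_le_sqrt h1
      _ = K * Real.sqrt (T - t) := Real.sqrt_sq (by positivity)
  refine ⟨parta, fun hβeq => ⟨?_, ?_⟩⟩
  · -- Ȳ is a solution
    set A := (θ / (2 * c)) ^ 2 with hAdef
    have hA : 0 < A := by positivity
    refine ⟨(Continuous.continuousOn (by continuity)), by simp, ?_, ?_⟩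
    · intro t ht
      have : 0 < T - t := sub_pos.mpr ht.2
      positivity
    · intro t ht
      have hTt : 0 < T - t := sub_pos.mpr ht.2
      have hsT : 0 < Real.sqrt (T - t) := Real.sqrt_pos.mpr hTt
      have hd : HasDerivAt (fun s => A * (T - s)) (-A) t := by
        simpa using ((hasDerivAt_id t).const_sub T).const_mul A
      have hval : -(θ ^ 2 * ((c + β * Real.sqrt (T - t) / Real.sqrt (A * (T - t))) ^ 2)⁻¹)
          = -A := by
        have hsqrtA : Real.sqrt A = θ / (2 * c) := by
          rw [hAdef, Real.sqrt_sq (by positivity)]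
        rw [Real.sqrt_mul hA.le, hsqrtA]
        have harg : β * Real.sqrt (T - t) / (θ / (2 * c) * Real.sqrt (T - t)) = c := by
          rw [hβeq]
          field_simp
        rw [harg, hAdef]
        have h2c : (c + c) ^ 2 = 4 * c ^ 2 := by ring
        rw [h2c]
        field_simp
        ring
      rw [show (fun s => (θ / (2 * c)) ^ 2 * (T - s)) = fun s => A * (T - s) from rfl]
      rw [hval]
      exact hd.hasDerivWithinAt
  · -- maximality
    intro Y hY t ht
    have hKeq : K = θ / (2 * c) := by
      rw [hKdef, hβeq]
      field_simp
      ring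
    have h := main Y hY t ht
    calc Y t ≤ K ^ 2 * (T - t) := h
      _ = (θ / (2 * c)) ^ 2 * (T - t) := by rw [hKeq]
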